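/- Let p be an odd prime, e ≥ 1, and let Ω_e(p) be the set of positive integers N expressible as N = h·p^e + Σ_{i=1}^{e} (1/2)(p^e - p^{e-i})x_i with nonnegative integers h, x_1,…,x_e. Then N ∈ Ω_e(p) if and only if S_e(2N) ≥ (e - τ(N))(p-1), where 2N = a_0 + a_1 p + ⋯ + a_{e-1}p^{e-1} + a_e p^e with 0 ≤ a_i < p for i < e and a_e ≥ 0, S_e(2N) = Σ_{i=0}^{e} a_i, and τ(N) is the least index j with a_j ≠ 0. -/

import Mathlib

open Finset

private lemma lem_divsum (d : ℕ) (s : Finset ℕ) (f : ℕ → ℕ) :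
    ∑ i ∈ s, f i / d ≤ (∑ i ∈ s, f i) / d := by
  classical
  rcases Nat.eq_zero_or_pos d with hd | hd
  · simp [hd]
  induction s using Finset.induction with
  | empty => simp
  | insert _ _ hnot ih =>
    rw [Finset.sum_insert hnot, Finset.sum_insert hnot]
    calc _ ≤ _ / d + (∑ i ∈ _, f i) / d := Nat.add_le_add_left ih _
      _ ≤ _ := by
        rw [Nat.le_div_iff_mul_le hd, add_mul]
        exact Nat.add_le_add (Nat.div_mul_le_self _ _) (Nat.div_mul_le_self _ _)

private lemma lem_A (p n : ℕ) (hp : 0 < p) (k : ℕ) :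
    ∑ i ∈ range k, n / p ^ i % p + n / p ^ k
      + (p - 1) * ∑ i ∈ Icc 1 k, n / p ^ i = n := by
  induction k with
  | zero => simp
  | succ k ih =>
    rw [Finset.sum_range_succ, Finset.sum_Icc_succ_top (Nat.one_le_iff_ne_zero.mpr (Nat.succ_ne_zero k))]
    have hdd : n / p ^ (k + 1) = n / p ^ k / p := by
      rw [pow_succ, Nat.div_div_eq_div_mul]
    have hmd : n / p ^ k % p + p * (n / p ^ k / p) = n / p ^ k := Nat.mod_add_div _ _
    have hc : p - 1 + 1 = p := Nat.succ_pred_eq_of_pos hp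
    set A := ∑ i ∈ range k, n / p ^ i % p
    set T := ∑ i ∈ Icc 1 k, n / p ^ i
    rw [hdd] at *
    set u := n / p ^ k / p
    set v := n / p ^ k
    have key : v % p + u + (p - 1) * u = v := by
      have : u + (p - 1) * u = p * u := by
        nth_rewrite 1 [← one_mul u]
        rw [← add_mul, add_comm, hc]
      omega
    calc A + v % p + u + (p - 1) * (T + u)
        = A + (v % p + u + (p - 1) * u) + (p - 1) * T := by ring
      _ = A + v + (p - 1) * T := by rw [key]
      _ = n := ih

private lemma lem_B (p n : ℕ) (hp : 0 < p) (k : ℕ) :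
    ∑ j ∈ range k, p ^ j * (n / p ^ j % p) = n % p ^ k := by
  induction k with
  | zero => simp [Nat.mod_one]
  | succ k ih =>
    rw [Finset.sum_range_succ, ih]
    have h1 : p ^ k * (n / p ^ k) + n % p ^ k = n := Nat.div_add_mod _ _
    have h2 : p ^ (k+1) * (n / p ^ (k+1)) + n % p ^ (k+1) = n := Nat.div_add_mod _ _
    have h3 : p * (n / p ^ k / p) + n / p ^ k % p = n / p ^ k := Nat.div_add_mod _ _
    have hdd : n / p ^ (k + 1) = n / p ^ k / p := by
      rw [pow_succ, Nat.div_div_eq_div_mul]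
    have hlt : n % p ^ (k+1) < p ^ (k+1) := Nat.mod_lt _ (pow_pos hp _)
    have hlt2 : n % p ^ k < p ^ k := Nat.mod_lt _ (pow_pos hp _)
    have hmp : n / p ^ k % p < p := Nat.mod_lt _ hp
    have e1 : p ^ k * (p * (n / p ^ (k+1))) + (n % p ^ k + p ^ k * (n / p ^ k % p)) = n := by
      rw [hdd]
      calc p ^ k * (p * (n / p ^ k / p)) + (n % p ^ k + p ^ k * (n / p ^ k % p))
          = p ^ k * (p * (n / p ^ k / p) + n / p ^ k % p) + n % p ^ k := by ring
        _ = p ^ k * (n / p ^ k) + n % p ^ k := by rw [h3]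
        _ = n := h1
    have e2 : p ^ k * (p * (n / p ^ (k+1))) + n % p ^ (k+1) = n := by
      calc p ^ k * (p * (n / p ^ (k+1))) + n % p ^ (k+1)
          = p ^ (k+1) * (n / p ^ (k+1)) + n % p ^ (k+1) := by ring
        _ = n := h2
    have hb : n % p ^ k + p ^ k * (n / p ^ k % p) < p ^ (k+1) := by
      have h4 : p ^ k * (n / p ^ k % p) ≤ p ^ k * (p - 1) :=
        Nat.mul_le_mul_left _ (by omega)
      have hpk : p ^ (k+1) = p ^ k * p := pow_succ p k
      have h5 : p ^ k * (p-1) + p ^ k ≤ p ^ k * p := by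
        rw [← Nat.mul_succ]
        exact Nat.mul_le_mul_left _ (by omega)
      omega
    omega

private lemma lem_geo (p : ℕ) (hp : 0 < p) (k : ℕ) :
    (p - 1) * ∑ m ∈ Icc 1 k, p ^ (k - m) + 1 = p ^ k := by
  induction k with
  | zero => simp
  | succ k ih =>
    have hins : Icc 1 (k+1) = insert (k+1) (Icc 1 k) := by
      ext m
      simp only [Finset.mem_Icc, Finset.mem_insert]
      omega
    rw [hins, Finset.sum_insert (by simp)]
    have hstep : ∑ m ∈ Icc 1 k, p ^ (k + 1 - m) = p * ∑ m ∈ Icc 1 k, p ^ (k - m) := by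
      rw [Finset.mul_sum]
      apply Finset.sum_congr rfl
      intro m hm
      simp only [Finset.mem_Icc] at hm
      rw [show k + 1 - m = (k - m) + 1 by omega, pow_succ]
      ring
    rw [Nat.sub_self, pow_zero, hstep]
    set G := ∑ m ∈ Icc 1 k, p ^ (k - m)
    have hc : p - 1 + 1 = p := Nat.succ_pred_eq_of_pos hp
    calc (p - 1) * (1 + p * G) + 1
        = (p - 1 + 1) + p * ((p-1) * G) := by ring
      _ = p + p * ((p-1) * G) := by rw [hc]
      _ = p * ((p-1) * G + 1) := by ring
      _ = p * p ^ k := by rw [ih]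
      _ = p ^ (k+1) := by rw [pow_succ]; ring

private lemma lem_Wbound (p e : ℕ) (hp : 0 < p) (x : ℕ → ℕ) :
    ∑ i ∈ Icc 1 e, p ^ (e - i) * x i ≤
      (∑ i ∈ Icc 1 e, x i) +
        (p - 1) * ∑ m ∈ Icc 1 e, (∑ i ∈ Icc 1 e, p ^ (e - i) * x i) / p ^ m := by
  set W := ∑ i ∈ Icc 1 e, p ^ (e - i) * x i with hW
  have step1 : ∀ i ∈ Icc 1 e,
      (p ^ (e - i) - 1) * x i ≤ (p - 1) * ∑ m ∈ Icc 1 e, (p ^ (e - i) * x i) / p ^ m := by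
    intro i hi
    simp only [Finset.mem_Icc] at hi
    have hgeo := lem_geo p hp (e - i)
    have hsub : ∀ m ∈ Icc 1 (e - i), p ^ (e - i - m) * x i ≤ (p ^ (e - i) * x i) / p ^ m := by
      intro m hm
      simp only [Finset.mem_Icc] at hm
      have hpow : p ^ (e - i) = p ^ m * p ^ (e - i - m) := by
        rw [← pow_add]
        congr 1
        omega
      rw [hpow, mul_assoc, Nat.mul_div_cancel_left _ (pow_pos hp m)]
    calc (p ^ (e - i) - 1) * x i
        = ((p - 1) * ∑ m ∈ Icc 1 (e - i), p ^ (e - i - m)) * x i := by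
          congr 1
          omega
      _ = (p - 1) * ∑ m ∈ Icc 1 (e - i), p ^ (e - i - m) * x i := by
          rw [mul_assoc, Finset.sum_mul]
      _ ≤ (p - 1) * ∑ m ∈ Icc 1 (e - i), (p ^ (e - i) * x i) / p ^ m :=
          Nat.mul_le_mul_left _ (Finset.sum_le_sum hsub)
      _ ≤ (p - 1) * ∑ m ∈ Icc 1 e, (p ^ (e - i) * x i) / p ^ m := by
          apply Nat.mul_le_mul_left
          apply Finset.sum_le_sum_of_subset
          apply Finset.Icc_subset_Icc_right
          omega
  have split : W = (∑ i ∈ Icc 1 e, (p ^ (e - i) - 1) * x i) + ∑ i ∈ Icc 1 e, x i := by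
    rw [hW, ← Finset.sum_add_distrib]
    apply Finset.sum_congr rfl
    intro i _
    have h1 : 1 ≤ p ^ (e - i) := Nat.one_le_pow _ _ hp
    have h2 : (p ^ (e - i) - 1) * x i + 1 * x i = p ^ (e - i) * x i := by
      rw [← Nat.add_mul]
      congr 1
      omega
    omega
  have main : (∑ i ∈ Icc 1 e, (p ^ (e - i) - 1) * x i)
      ≤ (p - 1) * ∑ m ∈ Icc 1 e, W / p ^ m := by
    calc ∑ i ∈ Icc 1 e, (p ^ (e - i) - 1) * x i
        ≤ ∑ i ∈ Icc 1 e, (p - 1) * ∑ m ∈ Icc 1 e, (p ^ (e - i) * x i) / p ^ m :=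
          Finset.sum_le_sum step1
      _ = (p - 1) * ∑ m ∈ Icc 1 e, ∑ i ∈ Icc 1 e, (p ^ (e - i) * x i) / p ^ m := by
          simp only [Finset.mul_sum]
          rw [Finset.sum_comm]
      _ ≤ (p - 1) * ∑ m ∈ Icc 1 e, W / p ^ m := by
          apply Nat.mul_le_mul_left
          apply Finset.sum_le_sum
          intro m _
          exact lem_divsum _ _ _
  omega

private lemma lem_block (Q M W c : ℕ) (hQ : 0 < Q) (h : M + W = c * Q) :
    M / Q + W / Q + (if Q ∣ M then 0 else 1) = c := by
  have hM : Q * (M / Q) + M % Q = M := Nat.div_add_mod M Q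
  have hW : Q * (W / Q) + W % Q = W := Nat.div_add_mod W Q
  have hMlt : M % Q < Q := Nat.mod_lt _ hQ
  have hWlt : W % Q < Q := Nat.mod_lt _ hQ
  have hdvd : Q ∣ M % Q + W % Q := by
    have h0 : (M + W) % Q = 0 := by rw [h, Nat.mul_mod_left]
    have h1 := Nat.add_mod M W Q
    rw [h0] at h1
    exact Nat.dvd_of_mod_eq_zero h1.symm
  by_cases hd : Q ∣ M
  · have hM0 : M % Q = 0 := by
      obtain ⟨m, rfl⟩ := hd
      exact Nat.mul_mod_right Q m
    have hW0 : W % Q = 0 := by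
      rw [hM0, zero_add] at hdvd
      exact Nat.eq_zero_of_dvd_of_lt hdvd hWlt
    rw [if_pos hd, add_zero]
    rw [mul_comm c Q] at h
    have : Q * (M / Q + W / Q) = Q * c := by
      rw [Nat.mul_add]
      omega
    exact Nat.eq_of_mul_eq_mul_left hQ this
  · have hM0 : M % Q ≠ 0 := fun hc => hd (Nat.dvd_of_mod_eq_zero hc)
    obtain ⟨k, hk⟩ := hdvd
    have hk1 : k = 1 := by
      rcases Nat.lt_or_ge k 2 with hk2 | hk2
      · interval_cases k <;> omega
      · have : Q * 2 ≤ Q * k := Nat.mul_le_mul_left _ hk2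
        omega
    rw [hk1, mul_one] at hk
    rw [if_neg hd]
    rw [mul_comm c Q] at h
    have : Q * (M / Q + W / Q + 1) = Q * c := by
      rw [Nat.mul_add, Nat.mul_add, Nat.mul_one]
      omega
    exact Nat.eq_of_mul_eq_mul_left hQ this

private lemma lem_blocksum (p e M W K τ : ℕ) (hp : 0 < p)
    (h : M + W = K * p ^ e) (hτe : τ ≤ e)
    (hdvd : ∀ i ≤ τ, p ^ i ∣ M) (hndvd : ∀ i, τ < i → i ≤ e → ¬ p ^ i ∣ M) :
    (∑ i ∈ Icc 1 e, M / p ^ i) + (∑ i ∈ Icc 1 e, W / p ^ i) + (e - τ)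
      = K * ∑ i ∈ Icc 1 e, p ^ (e - i) := by
  have hterm : ∀ i ∈ Icc 1 e,
      M / p ^ i + W / p ^ i + (if p ^ i ∣ M then 0 else 1) = K * p ^ (e - i) := by
    intro i hi
    simp only [Finset.mem_Icc] at hi
    apply lem_block _ _ _ _ (pow_pos hp i)
    rw [h, mul_assoc, ← pow_add]
    congr 2
    omega
  have hsum : ∑ i ∈ Icc 1 e,
      (M / p ^ i + W / p ^ i + (if p ^ i ∣ M then 0 else 1))
      = K * ∑ i ∈ Icc 1 e, p ^ (e - i) := by
    rw [Finset.mul_sum]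
    exact Finset.sum_congr rfl fun i hi => hterm i hi
  have hite : ∑ i ∈ Icc 1 e, (if p ^ i ∣ M then 0 else 1) = e - τ := by
    have h1 : Icc 1 e = Ioc 0 e := by
      ext m; simp only [Finset.mem_Icc, Finset.mem_Ioc]; omega
    rw [h1, ← Finset.sum_Ioc_consecutive _ (Nat.zero_le τ) hτe]
    have h2 : ∑ i ∈ Ioc 0 τ, (if p ^ i ∣ M then 0 else 1) = 0 := by
      apply Finset.sum_eq_zero
      intro i hi
      simp only [Finset.mem_Ioc] at hi
      rw [if_pos (hdvd i hi.2)]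
    have h3 : ∑ i ∈ Ioc τ e, (if p ^ i ∣ M then (0:ℕ) else 1) = e - τ := by
      rw [Finset.sum_congr rfl (fun i hi => ?_), Finset.sum_const, smul_eq_mul, mul_one,
        Nat.card_Ioc]
      simp only [Finset.mem_Ioc] at hi
      rw [if_neg (hndvd i hi.1 hi.2)]
    rw [h2, h3, zero_add]
  rw [← hsum, Finset.sum_add_distrib, Finset.sum_add_distrib, hite]

private lemma lem_reindex (e : ℕ) (f : ℕ → ℕ) :
    ∑ i ∈ Icc 1 e, f (e - i) = ∑ j ∈ range e, f j := by
  rw [← Finset.Ico_add_one_right_eq_Icc, Finset.sum_Ico_eq_sum_range,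
    show (e + 1 - 1) = e from rfl, ← Finset.sum_range_reflect]
  apply Finset.sum_congr rfl
  intro j hj
  congr 1
  simp only [Finset.mem_range] at hj
  omega

private lemma lem_gx (p e : ℕ) (hp : 0 < p) (x : ℕ → ℕ) :
    (∑ i ∈ Icc 1 e, (p ^ e - p ^ (e - i)) * x i) + (∑ i ∈ Icc 1 e, p ^ (e - i) * x i)
      = p ^ e * ∑ i ∈ Icc 1 e, x i := by
  rw [← Finset.sum_add_distrib, Finset.mul_sum]
  apply Finset.sum_congr rfl
  intro i _
  rw [← Nat.add_mul]
  congr 1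
  have h1 : p ^ (e - i) ≤ p ^ e := Nat.pow_le_pow_right hp (by omega)
  omega

set_option maxHeartbeats 1000000 in
theorem stmt_4 (p e N : ℕ) (hp : p.Prime) (hodd : Odd p) (he : 1 ≤ e) (hN : 0 < N) :
    (∃ h : ℕ, ∃ x : ℕ → ℕ,
        2 * N = 2 * h * p ^ e + ∑ i ∈ Finset.Icc 1 e, (p ^ e - p ^ (e - i)) * x i) ↔
      (let a : ℕ → ℕ := fun i => if i < e then 2 * N / p ^ i % p else 2 * N / p ^ e
       let S : ℕ := ∑ i ∈ Finset.range (e + 1), a i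
       let τ : ℕ := sInf {j | a j ≠ 0}
       (e - τ) * (p - 1) ≤ S) := by
  have hp1 : 0 < p := hp.pos
  have h1p : 1 ≤ p := hp1
  show (∃ h : ℕ, ∃ x : ℕ → ℕ,
        2 * N = 2 * h * p ^ e + ∑ i ∈ Finset.Icc 1 e, (p ^ e - p ^ (e - i)) * x i) ↔
      (e - sInf {j | (if j < e then 2 * N / p ^ j % p else 2 * N / p ^ e) ≠ 0}) * (p - 1)
        ≤ ∑ i ∈ Finset.range (e + 1), (if i < e then 2 * N / p ^ i % p else 2 * N / p ^ e)
  set M := 2 * N with hMdef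
  set τ := sInf {j | (if j < e then M / p ^ j % p else M / p ^ e) ≠ 0} with hτdef
  set S := ∑ i ∈ Finset.range (e + 1), (if i < e then M / p ^ i % p else M / p ^ e) with hSdef
  set TM := ∑ i ∈ Icc 1 e, M / p ^ i with hTMdef
  set P := ∑ i ∈ Icc 1 e, p ^ (e - i) with hPdef
  have hM0 : 0 < M := by omega
  -- digit sum identity
  have hS' : S = (∑ i ∈ range e, M / p ^ i % p) + M / p ^ e := by
    rw [hSdef, Finset.sum_range_succ, if_neg (lt_irrefl e)]
    congr 1
    apply Finset.sum_congr rfl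
    intro i hi
    rw [if_pos (Finset.mem_range.mp hi)]
  have hdagger : S + (p - 1) * TM = M := by
    rw [hS', hTMdef]
    exact lem_A p M hp1 e
  have hgeoP : (p - 1) * P + 1 = p ^ e := lem_geo p hp1 e
  -- τ facts
  have hAne : ∃ j, j ≤ e ∧ (if j < e then M / p ^ j % p else M / p ^ e) ≠ 0 := by
    by_cases hq : M / p ^ e = 0
    · have hMlt : M < p ^ e := (Nat.div_eq_zero_iff_lt (pow_pos hp1 e)).mp hq
      by_contra hcon
      push_neg at hcon
      have hz : M % p ^ e = 0 := by
        rw [← lem_B p M hp1 e]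
        apply Finset.sum_eq_zero
        intro j hj
        have hje : j < e := Finset.mem_range.mp hj
        have := hcon j (le_of_lt hje)
        rw [if_pos hje] at this
        rw [this, mul_zero]
      rw [Nat.mod_eq_of_lt hMlt] at hz
      omega
    · exact ⟨e, le_refl e, by rw [if_neg (lt_irrefl e)]; exact hq⟩
  obtain ⟨j0, hj0e, hj0⟩ := hAne
  have hAne' : {j | (if j < e then M / p ^ j % p else M / p ^ e) ≠ 0}.Nonempty := ⟨j0, hj0⟩
  have hτe : τ ≤ e := le_trans (Nat.sInf_le hj0) hj0e
  have hτmem : (if τ < e then M / p ^ τ % p else M / p ^ e) ≠ 0 := Nat.sInf_mem hAne'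
  have hτmin : ∀ j, j < τ → (if j < e then M / p ^ j % p else M / p ^ e) = 0 := by
    intro j hj
    by_contra hne
    exact absurd (Nat.sInf_le hne) (not_le.mpr hj)
  have hdvd : ∀ i ≤ τ, p ^ i ∣ M := by
    intro i hi
    apply Nat.dvd_of_mod_eq_zero
    rw [← lem_B p M hp1 i]
    apply Finset.sum_eq_zero
    intro j hj
    have hji : j < i := Finset.mem_range.mp hj
    have hje : j < e := by omega
    have := hτmin j (by omega)
    rw [if_pos hje] at this
    rw [this, mul_zero]
  have hndvd : ∀ i, τ < i → i ≤ e → ¬ p ^ i ∣ M := by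
    intro i hi hie hdv
    have hτlt : τ < e := by omega
    rw [if_pos hτlt] at hτmem
    have hdv1 : p ^ (τ + 1) ∣ M := dvd_trans (pow_dvd_pow p (by omega)) hdv
    obtain ⟨c, hc⟩ := hdv1
    have : M / p ^ τ % p = 0 := by
      rw [hc, pow_succ, show p ^ τ * p * c = p ^ τ * (p * c) by ring,
        Nat.mul_div_cancel_left _ (pow_pos hp1 τ), Nat.mul_mod_right]
    exact hτmem this
  clear_value M τ S TM P
  constructor
  · -- forward
    rintro ⟨h, x, hx⟩
    set W := ∑ i ∈ Icc 1 e, p ^ (e - i) * x i with hWdef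
    set X := ∑ i ∈ Icc 1 e, x i with hXdef
    set TW := ∑ i ∈ Icc 1 e, W / p ^ i with hTWdef
    have hgx := lem_gx p e hp1 x
    rw [← hWdef, ← hXdef] at hgx
    have hMW : M + W = (2 * h + X) * p ^ e := by
      calc M + W = 2 * h * p ^ e + ((∑ i ∈ Icc 1 e, (p ^ e - p ^ (e - i)) * x i) + W) := by
            rw [hx]; ring
        _ = 2 * h * p ^ e + p ^ e * X := by rw [hgx]
        _ = (2 * h + X) * p ^ e := by ring
    set K := 2 * h + X with hKdef
    clear_value W X TW K
    have hblock := lem_blocksum p e M W K τ hp1 hMW hτe hdvd hndvd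
    rw [← hTMdef, ← hTWdef, ← hPdef] at hblock
    have hWb := lem_Wbound p e hp1 x
    rw [← hWdef, ← hXdef, ← hTWdef] at hWb
    have hXK : X ≤ K := by rw [hKdef]; omega
    -- cast to ℤ
    have hb2 : ((p : ℤ) - 1) * ((TM : ℤ) + TW + ((e : ℤ) - τ)) = ((p : ℤ) - 1) * (K * P) := by
      have : ((TM : ℤ) + TW + ((e : ℤ) - τ)) = (K : ℤ) * P := by
        have := hblock
        zify [hτe] at this
        linarith
      rw [this]
    have hg2 : (K : ℤ) * (((p : ℤ) - 1) * P + 1) = (K : ℤ) * (p : ℤ) ^ e := by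
      have : ((p : ℤ) - 1) * P + 1 = (p : ℤ) ^ e := by
        have := hgeoP
        zify [h1p] at this
        linarith
      rw [this]
    have hdZ : (S : ℤ) + ((p : ℤ) - 1) * TM = M := by
      have := hdagger; zify [h1p] at this; linarith
    have hMWZ : (M : ℤ) + W = (K : ℤ) * (p : ℤ) ^ e := by exact_mod_cast hMW
    have hWbZ : (W : ℤ) ≤ (X : ℤ) + ((p : ℤ) - 1) * TW := by
      have := hWb; zify [h1p] at this; linarith
    have hXKZ : (X : ℤ) ≤ K := by exact_mod_cast hXK
    have goalZ : ((e : ℤ) - τ) * ((p : ℤ) - 1) ≤ S := by linarith [hb2, hg2, hdZ, hMWZ, hWbZ, hXKZ]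
    zify [hτe, h1p]
    exact goalZ
  · -- reverse
    intro hcond
    by_cases hpe : p ^ e ∣ M
    · have hcop : Nat.Coprime (p ^ e) 2 := Nat.Coprime.pow_left e (hodd.coprime_two_right)
      have hpN : p ^ e ∣ N := hcop.dvd_of_dvd_mul_left (by rwa [← hMdef])
      obtain ⟨n', hn'⟩ := hpN
      refine ⟨n', fun _ => 0, ?_⟩
      rw [Finset.sum_eq_zero (fun i _ => mul_zero _), add_zero, hMdef, hn']
      ring
    · have hτlt : τ < e := by
        rcases Nat.lt_or_ge τ e with h' | h'
        · exact h'
        · exact absurd (hdvd e (by omega)) hpe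
      have hrlt : M % p ^ e < p ^ e := Nat.mod_lt _ (pow_pos hp1 e)
      have hr0 : M % p ^ e ≠ 0 := fun hc => hpe (Nat.dvd_of_mod_eq_zero hc)
      set W := p ^ e - M % p ^ e with hWdef
      have hWlt : W < p ^ e := by omega
      set x : ℕ → ℕ := fun i => W / p ^ (e - i) % p with hxdef
      have hsumW : ∑ i ∈ Icc 1 e, p ^ (e - i) * x i = W := by
        have := lem_reindex e (fun j => p ^ j * (W / p ^ j % p))
        simp only [hxdef]
        rw [this, lem_B p W hp1 e, Nat.mod_eq_of_lt hWlt]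
      set X := ∑ i ∈ Icc 1 e, x i with hXdef
      have hX' : X = ∑ j ∈ range e, W / p ^ j % p := by
        rw [hXdef, hxdef]
        exact lem_reindex e (fun j => W / p ^ j % p)
      set TW := ∑ i ∈ Icc 1 e, W / p ^ i with hTWdef
      have hXW : X + (p - 1) * TW = W := by
        have hA := lem_A p W hp1 e
        rw [← hTWdef] at hA
        rw [hX']
        have hWdiv : W / p ^ e = 0 := Nat.div_eq_of_lt hWlt
        omega
      set K := M / p ^ e + 1 with hKdef
      clear_value W x X TW
      have hMW : M + W = K * p ^ e := by
        have hdm : p ^ e * (M / p ^ e) + M % p ^ e = M := Nat.div_add_mod M (p ^ e)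
        calc M + W = p ^ e * (M / p ^ e) + M % p ^ e + (p ^ e - M % p ^ e) := by
              rw [hdm, hWdef]
          _ = p ^ e * (M / p ^ e) + p ^ e := by omega
          _ = (M / p ^ e + 1) * p ^ e := by ring
      clear_value K
      have hblock := lem_blocksum p e M W K τ hp1 hMW hτe hdvd hndvd
      rw [← hTMdef, ← hTWdef, ← hPdef] at hblock
      -- X ≤ K
      have hb2 : ((p : ℤ) - 1) * ((TM : ℤ) + TW + ((e : ℤ) - τ)) = ((p : ℤ) - 1) * ((K : ℤ) * P) := by
        have : ((TM : ℤ) + TW + ((e : ℤ) - τ)) = (K : ℤ) * P := by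
          have := hblock; zify [hτe] at this; linarith
        rw [this]
      have hg2 : (K : ℤ) * (((p : ℤ) - 1) * P + 1) = (K : ℤ) * (p : ℤ) ^ e := by
        have : ((p : ℤ) - 1) * P + 1 = (p : ℤ) ^ e := by
          have := hgeoP; zify [h1p] at this; linarith
        rw [this]
      have hdZ : (S : ℤ) + ((p : ℤ) - 1) * TM = M := by
        have := hdagger; zify [h1p] at this; linarith
      have hMWZ : (M : ℤ) + W = (K : ℤ) * (p : ℤ) ^ e := by exact_mod_cast hMW
      have hXWZ : (X : ℤ) + ((p : ℤ) - 1) * TW = W := by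
        have := hXW; zify [h1p] at this; linarith
      have hcondZ : ((e : ℤ) - τ) * ((p : ℤ) - 1) ≤ S := by
        have := hcond; zify [hτe, h1p] at this; linarith
      have hXKZ : (X : ℤ) ≤ K := by linarith [hb2, hg2, hdZ, hMWZ, hXWZ, hcondZ]
      have hXK : X ≤ K := by exact_mod_cast hXKZ
      -- parity
      obtain ⟨c, hc⟩ := hodd.pow (n := e)
      obtain ⟨d, hd⟩ := hodd
      have hpar : (K - X) % 2 = 0 := by
        have e1 : 2 * N + W = 2 * (K * c) + K := by
          have : K * p ^ e = 2 * (K * c) + K := by rw [hc]; ring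
          omega
        have e2 : X + 2 * (d * TW) = W := by
          have hp1' : p - 1 = 2 * d := by omega
          rw [← hXW, hp1', mul_assoc]
        omega
      set h' := (K - X) / 2 with hh'def
      clear_value h'
      have h2h : 2 * h' = K - X := by rw [hh'def]; omega
      refine ⟨h', x, ?_⟩
      have hgx := lem_gx p e hp1 x
      rw [hsumW, ← hXdef] at hgx
      -- cast to ℤ and finish
      have h2hZ : 2 * (h' : ℤ) = (K : ℤ) - X := by
        have : (2 * h' : ℕ) = ((K - X : ℕ) : ℕ) := h2h
        zify [hXK] at this
        linarith
      have hgxZ : ((∑ i ∈ Icc 1 e, (p ^ e - p ^ (e - i)) * x i : ℕ) : ℤ) + W = (p : ℤ) ^ e * X := by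
        exact_mod_cast hgx
      have hfin : (M : ℤ) = 2 * (h' : ℤ) * (p : ℤ) ^ e
          + ((∑ i ∈ Icc 1 e, (p ^ e - p ^ (e - i)) * x i : ℕ) : ℤ) := by
        have hMWZ' : (M : ℤ) + W = (K : ℤ) * (p : ℤ) ^ e := by exact_mod_cast hMW
        have h2hZ' : 2 * (h' : ℤ) * (p : ℤ) ^ e = ((K : ℤ) - X) * (p : ℤ) ^ e := by
          rw [h2hZ]
        linarith [h2hZ', hgxZ, hMWZ']
      exact_mod_cast hfin
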